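/- Closed form of the activating volume on the second branch: let t ∈ [0,1], s = √(1 − t²), v ∈ [0,1] and c ∈ ℝ. If v·Δκ·t > d₂(v)·s and f^HS(t;v) = c, then c ≠ μ⁺·(1 − 2t²) and v = ((κ⁺ + μ⁺)/Δκ) · (1 − t²·(κ⁻ + μ⁺) / (c − μ⁺·(1 − 2t²))). -/

import Mathlib

open Real

/-- The square root `s = √(1 - t²)`. -/
noncomputable def sHS (t : ℝ) : ℝ := Real.sqrt (1 - t ^ 2)

/-- The Hashin–Shtrikman correction term `q(t; v)` for two well-ordered isotropic
plane-stress phases with bulk moduli `κm < κp` and shear moduli `μm < μp`. -/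
noncomputable def qHS (κm κp μm μp t v : ℝ) : ℝ :=
  if v * (κp - κm) * t ≤ (κp + μp - (κp - κm) * v) * sHS t ∧
     v * (μp - μm) * sHS t ≤ (κp + μp - (μp - μm) * v) * t then
    v * (1 - v) * ((κp - κm) * t - (μp - μm) * sHS t) ^ 2 /
      (κp + μp - ((κp - κm) + (μp - μm)) * v)
  else if (κp + μp - (κp - κm) * v) * sHS t < v * (κp - κm) * t then
    (1 - v) * (v * (κp - κm) ^ 2 * t ^ 2 / (κp + μp - (κp - κm) * v)
      - (μp - μm) * (sHS t) ^ 2)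
  else
    (1 - v) * (v * (μp - μm) ^ 2 * (sHS t) ^ 2 / (κp + μp - (μp - μm) * v)
      - (κp - κm) * t ^ 2)

/-- The Hashin–Shtrikman upper-bound function `f^HS(t; v)`:
the Voigt energy minus the correction `q(t; v)`. -/
noncomputable def fHS (κm κp μm μp t v : ℝ) : ℝ :=
  (κm + v * (κp - κm)) * t ^ 2 + (μm + v * (μp - μm)) * (1 - t ^ 2)
    - qHS κm κp μm μp t v

/-- Closed form of the activating volume on the second branch: if
`v·Δκ·t > d₂(v)·s` and `f^HS(t;v) = c`, then `c ≠ μ⁺·(1 − 2t²)` and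
`v = ((κ⁺+μ⁺)/Δκ)·(1 − t²·(κ⁻+μ⁺)/(c − μ⁺·(1 − 2t²)))`. -/
theorem hs_activating_volume_branch2
    (κm κp μm μp : ℝ) (hκm : 0 < κm) (hκ : κm < κp) (hμm : 0 < μm) (hμ : μm < μp)
    (v : ℝ) (hv : v ∈ Set.Icc (0 : ℝ) 1) (t : ℝ) (ht : t ∈ Set.Icc (0 : ℝ) 1)
    (s : ℝ) (hs : s = Real.sqrt (1 - t ^ 2)) (c : ℝ)
    (hbr : v * (κp - κm) * t > (κp + μp - (κp - κm) * v) * s)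
    (hact : fHS κm κp μm μp t v = c) :
    c ≠ μp * (1 - 2 * t ^ 2) ∧
    v = ((κp + μp) / (κp - κm)) *
      (1 - t ^ 2 * (κm + μp) / (c - μp * (1 - 2 * t ^ 2))) := by
  obtain ⟨hv0, hv1⟩ := hv
  obtain ⟨ht0, ht1⟩ := ht
  have h1t : (0:ℝ) ≤ 1 - t ^ 2 := by nlinarith
  have hsHS : sHS t = s := by rw [sHS, hs]
  have hs0 : 0 ≤ s := hs ▸ Real.sqrt_nonneg _
  have hs2 : s ^ 2 = 1 - t ^ 2 := by rw [hs]; exact Real.sq_sqrt h1t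
  -- d₂ > 0
  have hd2 : 0 < κp + μp - (κp - κm) * v := by nlinarith
  -- t > 0 from branch condition
  have htpos : 0 < t := by nlinarith [mul_nonneg hd2.le hs0, mul_nonneg hv0 (sub_pos.2 hκ).le]
  -- compute fHS on this branch
  have hq : qHS κm κp μm μp t v =
      (1 - v) * (v * (κp - κm) ^ 2 * t ^ 2 / (κp + μp - (κp - κm) * v)
        - (μp - μm) * (sHS t) ^ 2) := by
    rw [qHS, if_neg, if_pos]
    · rw [hsHS]; exact hbr
    · rw [hsHS]; intro h; exact absurd h.1 (not_le.2 hbr)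
  have hc : c = μp * (1 - 2 * t ^ 2) +
      t ^ 2 * (κm + μp) * (κp + μp) / (κp + μp - (κp - κm) * v) := by
    rw [← hact, fHS, hq, hsHS]
    rw [hs2]
    linear_combination (-(t ^ 2 * (κm + v * (κp - κm) + μp))) * mul_inv_cancel₀ hd2.ne'
  have hceq : c - μp * (1 - 2 * t ^ 2) =
      t ^ 2 * (κm + μp) * (κp + μp) / (κp + μp - (κp - κm) * v) := by
    rw [hc]; ring
  have hpos : 0 < t ^ 2 * (κm + μp) * (κp + μp) / (κp + μp - (κp - κm) * v) :=
    div_pos (mul_pos (mul_pos (pow_pos htpos 2) (by linarith)) (by linarith)) hd2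
  have hne : c - μp * (1 - 2 * t ^ 2) ≠ 0 := by rw [hceq]; exact hpos.ne'
  refine ⟨fun h => hne (by rw [h]; ring), ?_⟩
  have hΔκ : κp - κm ≠ 0 := by linarith
  have ht' : t ≠ 0 := htpos.ne'
  have h1 : κm + μp ≠ 0 := by linarith
  have h2 : κp + μp ≠ 0 := by linarith
  rw [hceq]
  field_simp
  ring
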